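/- Assume sup_{ℓ≥1} ℓ|a_ℓ| < ∞ and let m ≥ 1. Define b : ℕ≥1 → ℝ by b_ℓ := a_{ℓm}. Suppose q ∈ ℓ²_w solves the stationary Fourier system at κ > 0 for the coefficients b. Define p : ℕ≥1 → ℝ by p_{ℓm} := q_ℓ for every ℓ ≥ 1 and p_j := 0 whenever m does not divide j. Then p ∈ ℓ²_w and p solves the stationary Fourier system at κ for the coefficients a; in particular, p is m-periodic in the sense that its only possibly nonzero Fourier modes are at multiples of m. -/
import Mathlib


open scoped BigOperators
open Filter Topology Real

noncomputable section

/-- `x` solves the stationary Fourier system at intensity `κ` for coefficients `a`: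
for every `ℓ ≥ 1` the tail series converges absolutely (equivalently, is `Summable` in `ℝ`) and
`ℓ(2 − κ a_ℓ) x_ℓ = κ ∑_{j=1}^{ℓ−1} j a_j x_j x_{ℓ−j}
  + κ ∑_{j=ℓ+1}^∞ (j a_j − (j−ℓ) a_{j−ℓ}) x_j x_{j−ℓ}`,
where the infinite sum is indexed by `j = ℓ + k + 1`, `k : ℕ`. -/
def SolvesMV (a : ℕ → ℝ) (κ : ℝ) (x : ℕ → ℝ) : Prop :=
  ∀ ℓ : ℕ, 1 ≤ ℓ →
    Summable (fun k : ℕ =>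
      (((ℓ + k + 1 : ℕ) : ℝ) * a (ℓ + k + 1) - ((k + 1 : ℕ) : ℝ) * a (k + 1))
        * x (ℓ + k + 1) * x (k + 1)) ∧
    (ℓ : ℝ) * (2 - κ * a ℓ) * x ℓ
      = κ * ∑ j ∈ Finset.Ico 1 ℓ, (j : ℝ) * a j * x j * x (ℓ - j)
        + κ * ∑' k : ℕ,
            (((ℓ + k + 1 : ℕ) : ℝ) * a (ℓ + k + 1) - ((k + 1 : ℕ) : ℝ) * a (k + 1))
              * x (ℓ + k + 1) * x (k + 1)

/-- The squared weighted norm `∑_{ℓ≥1} (1+ℓ²) x_ℓ²`. -/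
def wnormSq (x : ℕ → ℝ) : ℝ := ∑' ℓ : ℕ, (1 + ((ℓ + 1 : ℕ) : ℝ) ^ 2) * x (ℓ + 1) ^ 2

/-- The weighted norm `‖x‖_w = (∑_{ℓ≥1} (1+ℓ²) x_ℓ²)^{1/2}`. -/
def wnorm (x : ℕ → ℝ) : ℝ := Real.sqrt (wnormSq x)

/-- Membership in the weighted space `ℓ²_w`. -/
def MemL2w (x : ℕ → ℝ) : Prop :=
  Summable fun ℓ : ℕ => (1 + ((ℓ + 1 : ℕ) : ℝ) ^ 2) * x (ℓ + 1) ^ 2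

/-- from a solution `q` of the Fourier system for the dilated coefficients
`b_ℓ = a_{ℓm}`, the `m`-periodic lift `p` (with `p_{ℓm} = q_ℓ` and `p_j = 0` for `m ∤ j`)
lies in `ℓ²_w` and solves the Fourier system for the coefficients `a`. -/
theorem periodic_lift_solves
    (a : ℕ → ℝ) (hA : ∃ C : ℝ, ∀ ℓ : ℕ, 1 ≤ ℓ → (ℓ : ℝ) * |a ℓ| ≤ C)
    (m : ℕ) (hm : 1 ≤ m) (κ : ℝ) (hκ : 0 < κ)
    (q : ℕ → ℝ) (hq : MemL2w q)
    (hqsol : SolvesMV (fun ℓ => a (ℓ * m)) κ q)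
    (p : ℕ → ℝ)
    (hp1 : ∀ ℓ : ℕ, 1 ≤ ℓ → p (ℓ * m) = q ℓ)
    (hp2 : ∀ j : ℕ, 1 ≤ j → ¬ m ∣ j → p j = 0) :
    MemL2w p ∧ SolvesMV a κ p := by
  have hm0 : 0 < m := hm
  set e : ℕ → ℕ := fun t => (t + 1) * m - 1 with he
  have he1 : ∀ t, e t + 1 = (t + 1) * m := fun t =>
    Nat.succ_pred_eq_of_pos (Nat.mul_pos t.succ_pos hm0)
  have heinj : Function.Injective e := by
    intro s t h
    have h2 : (s + 1) * m = (t + 1) * m := by rw [← he1 s, ← he1 t, h]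
    have := Nat.eq_of_mul_eq_mul_right hm0 h2
    omega
  have hrange : ∀ x : ℕ, x ∉ Set.range e → p (x + 1) = 0 := by
    intro x hx
    refine hp2 _ (by omega) ?_
    rintro ⟨s, hs⟩
    rcases Nat.eq_zero_or_pos s with rfl | hs0
    · omega
    · refine hx ⟨s - 1, ?_⟩
      have h3 : s - 1 + 1 = s := by omega
      rw [Nat.mul_comm] at hs
      simp only [he, h3]
      omega
  have hmem : MemL2w p := by
    rw [MemL2w]
    have hf0 : ∀ x ∉ Set.range e, (1 + ((x + 1 : ℕ) : ℝ) ^ 2) * p (x + 1) ^ 2 = 0 := by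
      intro x hx; rw [hrange x hx]; ring
    rw [← heinj.summable_iff hf0]
    have hm1 : (1 : ℝ) ≤ (m : ℝ) := by exact_mod_cast hm
    refine Summable.of_nonneg_of_le (fun t => ?_) (fun t => ?_)
      ((hq.mul_left ((m : ℝ) ^ 2)))
    · have : (0:ℝ) ≤ 1 + ((e t + 1 : ℕ) : ℝ) ^ 2 := by positivity
      exact mul_nonneg this (sq_nonneg _)
    · show (1 + ((e t + 1 : ℕ) : ℝ) ^ 2) * p (e t + 1) ^ 2
        ≤ (m : ℝ) ^ 2 * ((1 + ((t + 1 : ℕ) : ℝ) ^ 2) * q (t + 1) ^ 2)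
      rw [he1 t, hp1 _ t.succ_pos]
      have hq2 : (0:ℝ) ≤ q (t + 1) ^ 2 := sq_nonneg _
      have hb : (1 + (((t + 1) * m : ℕ) : ℝ) ^ 2) ≤ (m : ℝ) ^ 2 * (1 + ((t + 1 : ℕ) : ℝ) ^ 2) := by
        push_cast
        nlinarith [sq_nonneg ((t : ℝ) + 1), sq_nonneg ((m : ℝ) - 1)]
      nlinarith
  refine ⟨hmem, ?_⟩
  intro ℓ hℓ
  by_cases hdvd : m ∣ ℓ
  · -- ℓ = n * m
    obtain ⟨n, hn⟩ := hdvd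
    have hn1 : 1 ≤ n := by
      rcases Nat.eq_zero_or_pos n with rfl | h; · omega
      · exact h
    have hℓeq : ℓ = n * m := by rw [hn, Nat.mul_comm]
    subst hℓeq
    obtain ⟨hGsum, hGeq⟩ := hqsol n hn1
    -- the tail series
    set F : ℕ → ℝ := fun k =>
      (((n * m + k + 1 : ℕ) : ℝ) * a (n * m + k + 1) - ((k + 1 : ℕ) : ℝ) * a (k + 1))
        * p (n * m + k + 1) * p (k + 1) with hF
    set G : ℕ → ℝ := fun k =>
      (((n + k + 1 : ℕ) : ℝ) * a ((n + k + 1) * m) - ((k + 1 : ℕ) : ℝ) * a ((k + 1) * m))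
        * q (n + k + 1) * q (k + 1) with hG
    have hFe : ∀ t, F (e t) = (m : ℝ) * G t := by
      intro t
      have h2 : n * m + e t + 1 = (n + t + 1) * m := by
        rw [Nat.add_assoc, he1 t]; ring
      have h3 : e t + 1 = (t + 1) * m := he1 t
      simp only [hF, hG, h2, h3, hp1 _ (by omega : 1 ≤ n + t + 1), hp1 _ t.succ_pos]
      push_cast
      ring
    have hF0 : ∀ k ∉ Set.range e, F k = 0 := by
      intro k hk
      simp only [hF, hrange k hk, mul_zero]
    have hFcomp : (F ∘ e) = fun t => (m : ℝ) * G t := funext hFe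
    have hFsum : Summable F := by
      rw [← heinj.summable_iff hF0, hFcomp]
      exact hGsum.mul_left _
    have hsupp : Function.support F ⊆ Set.range e := by
      intro k hk
      by_contra hkn
      exact hk (hF0 k hkn)
    have hFtsum : ∑' k, F k = (m : ℝ) * ∑' k, G k := by
      rw [← heinj.tsum_eq hsupp]
      show ∑' t, (F ∘ e) t = _
      rw [hFcomp, tsum_mul_left]
    -- the finite sum
    have hfin : ∑ j ∈ Finset.Ico 1 (n * m), (j : ℝ) * a j * p j * p (n * m - j)
        = (m : ℝ) * ∑ i ∈ Finset.Ico 1 n, (i : ℝ) * a (i * m) * q i * q (n - i) := by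
      have hsub : (Finset.Ico 1 n).image (· * m) ⊆ Finset.Ico 1 (n * m) := by
        intro j hj
        simp only [Finset.mem_image, Finset.mem_Ico] at hj ⊢
        obtain ⟨i, ⟨hi1, hi2⟩, rfl⟩ := hj
        constructor
        · calc 1 = 1 * 1 := by norm_num
            _ ≤ i * m := Nat.mul_le_mul hi1 hm
        · exact (Nat.mul_lt_mul_right hm0).mpr hi2
      rw [← Finset.sum_subset hsub]
      · rw [Finset.sum_image (by
          intro x _ y _ h
          exact Nat.eq_of_mul_eq_mul_right hm0 h)]
        rw [Finset.mul_sum]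
        refine Finset.sum_congr rfl ?_
        intro i hi
        simp only [Finset.mem_Ico] at hi
        have h4 : n * m - i * m = (n - i) * m := (Nat.sub_mul n i m).symm
        rw [h4, hp1 _ hi.1, hp1 _ (by omega : 1 ≤ n - i)]
        push_cast
        ring
      · intro j hj hjn
        simp only [Finset.mem_Ico] at hj
        by_cases hd : m ∣ j
        · obtain ⟨i, hji⟩ := hd
          rw [Nat.mul_comm] at hji
          subst hji
          exfalso
          apply hjn
          simp only [Finset.mem_image, Finset.mem_Ico]
          refine ⟨i, ⟨?_, ?_⟩, rfl⟩
          · rcases Nat.eq_zero_or_pos i with rfl | h; · omega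
            · exact h
          · exact Nat.lt_of_mul_lt_mul_right hj.2
        · rw [hp2 j hj.1 hd]; ring
    refine ⟨hFsum, ?_⟩
    rw [hfin, hFtsum, hp1 n hn1]
    have : ((n * m : ℕ) : ℝ) * (2 - κ * a (n * m)) * q n
        = (m : ℝ) * ((n : ℝ) * (2 - κ * a (n * m)) * q n) := by push_cast; ring
    rw [this, hGeq]
    push_cast
    ring
  · -- m does not divide ℓ : everything vanishes
    have hterm : ∀ k : ℕ,
        (((ℓ + k + 1 : ℕ) : ℝ) * a (ℓ + k + 1) - ((k + 1 : ℕ) : ℝ) * a (k + 1))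
          * p (ℓ + k + 1) * p (k + 1) = 0 := by
      intro k
      by_cases hd : m ∣ k + 1
      · have hnd : ¬ m ∣ ℓ + k + 1 := by
          intro h
          apply hdvd
          have h5 : ℓ + k + 1 = (k + 1) + ℓ := by omega
          rw [h5] at h
          exact (Nat.dvd_add_right hd).mp h
        rw [hp2 _ (by omega) hnd]; ring
      · rw [hp2 _ (by omega) hd]; ring
    have hzero : (fun k : ℕ =>
        (((ℓ + k + 1 : ℕ) : ℝ) * a (ℓ + k + 1) - ((k + 1 : ℕ) : ℝ) * a (k + 1))
          * p (ℓ + k + 1) * p (k + 1)) = fun _ => (0:ℝ) := funext hterm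
    constructor
    · rw [hzero]; exact summable_zero
    · rw [hp2 ℓ hℓ hdvd]
      have hfin0 : ∑ j ∈ Finset.Ico 1 ℓ, (j : ℝ) * a j * p j * p (ℓ - j) = 0 := by
        refine Finset.sum_eq_zero ?_
        intro j hj
        simp only [Finset.mem_Ico] at hj
        by_cases hd : m ∣ j
        · have hnd : ¬ m ∣ ℓ - j := by
            intro h
            apply hdvd
            have : ℓ = (ℓ - j) + j := by omega
            rw [this]
            exact Nat.dvd_add h hd
          rw [hp2 _ (by omega) hnd]; ring
        · rw [hp2 _ hj.1 hd]; ring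
      rw [hfin0]
      have : ∑' k : ℕ,
          (((ℓ + k + 1 : ℕ) : ℝ) * a (ℓ + k + 1) - ((k + 1 : ℕ) : ℝ) * a (k + 1))
            * p (ℓ + k + 1) * p (k + 1) = 0 := by
        rw [hzero]; exact tsum_zero
      rw [this]
      ring
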